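/- Let α, β, γ be finite types with decidable equality and let A : Matrix (α ⊕ (β ⊕ γ)) (α ⊕ (β ⊕ γ)) (ZMod 2) be symmetric. Suppose M₁ : Matrix α (β ⊕ γ) (ZMod 2) satisfies A.toBlocks₁₂ = A.toBlocks₁₁ * M₁, and set B := A.toBlocks₂₂ - M₁ᵀ * A.toBlocks₁₁ * M₁ : Matrix (β ⊕ γ) (β ⊕ γ) (ZMod 2). Let A' be the reindexing of A along the sum-associativity equivalence α ⊕ (β ⊕ γ) ≃ (α ⊕ β) ⊕ γ. Then there exists M₂ : Matrix β γ (ZMod 2) with B.toBlocks₁₂ = B.toBlocks₁₁ * M₂ if and only if there exists M : Matrix (α ⊕ β) γ (ZMod 2) with A'.toBlocks₁₂ = A'.toBlocks₁₁ * M. (That is, β is reducible in the reduction Γ_α(A) if and only if α ∪ β is reducible in A.) -/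

import Mathlib

open Matrix

private lemma toCols₁_mul {m n p q : Type*} [Fintype n] (N : Matrix m n (ZMod 2))
    (M : Matrix n (p ⊕ q) (ZMod 2)) : (N * M).toCols₁ = N * M.toCols₁ := by
  ext i j; simp [toCols₁, mul_apply]

private lemma toCols₂_mul {m n p q : Type*} [Fintype n] (N : Matrix m n (ZMod 2))
    (M : Matrix n (p ⊕ q) (ZMod 2)) : (N * M).toCols₂ = N * M.toCols₂ := by
  ext i j; simp [toCols₂, mul_apply]

/-- `β` is reducible in the reduction `Γ_α(A)` iff `α ∪ β` is reducible in `A`. -/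
theorem stmt_6 {α β γ : Type*} [Fintype α] [DecidableEq α] [Fintype β] [DecidableEq β]
    [Fintype γ] [DecidableEq γ]
    (A : Matrix (α ⊕ (β ⊕ γ)) (α ⊕ (β ⊕ γ)) (ZMod 2)) (hA : Aᵀ = A)
    (M₁ : Matrix α (β ⊕ γ) (ZMod 2)) (hM₁ : A.toBlocks₁₂ = A.toBlocks₁₁ * M₁) :
    (∃ M₂ : Matrix β γ (ZMod 2),
        (A.toBlocks₂₂ - M₁ᵀ * A.toBlocks₁₁ * M₁).toBlocks₁₂ =
          (A.toBlocks₂₂ - M₁ᵀ * A.toBlocks₁₁ * M₁).toBlocks₁₁ * M₂) ↔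
      (∃ M : Matrix (α ⊕ β) γ (ZMod 2),
        (Matrix.reindex (Equiv.sumAssoc α β γ).symm (Equiv.sumAssoc α β γ).symm A).toBlocks₁₂ =
          (Matrix.reindex (Equiv.sumAssoc α β γ).symm (Equiv.sumAssoc α β γ).symm A).toBlocks₁₁ *
            M) := by
  classical
  -- notation
  set P : Matrix α α (ZMod 2) := A.toBlocks₁₁ with hPdef
  set Xb : Matrix α β (ZMod 2) := M₁.toCols₁ with hXb
  set Xc : Matrix α γ (ZMod 2) := M₁.toCols₂ with hXc
  set R11 : Matrix β β (ZMod 2) := A.toBlocks₂₂.toBlocks₁₁ with hR11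
  set R12 : Matrix β γ (ZMod 2) := A.toBlocks₂₂.toBlocks₁₂ with hR12
  have hPsymm : Pᵀ = P := by
    ext i j
    exact (congrFun (congrFun hA (Sum.inl j)) (Sum.inl i)).symm
  have hQb : A.toBlocks₁₂.toCols₁ = P * Xb := by
    rw [hM₁]; exact toCols₁_mul _ _
  have hQc : A.toBlocks₁₂.toCols₂ = P * Xc := by
    rw [hM₁]; exact toCols₂_mul _ _
  -- blocks of B
  have hprod : M₁ᵀ * P * M₁ =
      fromBlocks (Xbᵀ * P * Xb) (Xbᵀ * P * Xc) (Xcᵀ * P * Xb) (Xcᵀ * P * Xc) := by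
    conv_lhs => rw [← fromCols_toCols M₁]
    rw [transpose_fromCols, fromRows_mul, fromRows_mul_fromCols, ← hXb, ← hXc,
      Matrix.mul_assoc, Matrix.mul_assoc, Matrix.mul_assoc, Matrix.mul_assoc]
  have hB11 : (A.toBlocks₂₂ - M₁ᵀ * P * M₁).toBlocks₁₁ = R11 - Xbᵀ * P * Xb := by
    rw [hprod]; ext i j; simp [toBlocks₁₁, fromBlocks, hR11]
  have hB12 : (A.toBlocks₂₂ - M₁ᵀ * P * M₁).toBlocks₁₂ = R12 - Xbᵀ * P * Xc := by
    rw [hprod]; ext i j; simp [toBlocks₁₂, fromBlocks, hR12]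
  -- blocks of the reindexed matrix
  have hA'12 : (Matrix.reindex (Equiv.sumAssoc α β γ).symm (Equiv.sumAssoc α β γ).symm
      A).toBlocks₁₂ = fromRows (P * Xc) R12 := by
    rw [← hQc]
    ext (a | b) c <;> rfl
  have hA'11 : (Matrix.reindex (Equiv.sumAssoc α β γ).symm (Equiv.sumAssoc α β γ).symm
      A).toBlocks₁₁ = fromBlocks P (P * Xb) (P * Xb)ᵀ R11 := by
    rw [← hQb]
    ext (a | b) (a' | b')
    · rfl
    · rfl
    · show A (Sum.inr (Sum.inl b)) (Sum.inl a') = A (Sum.inl a') (Sum.inr (Sum.inl b))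
      exact (congrFun (congrFun hA (Sum.inr (Sum.inl b))) (Sum.inl a')).symm
    · rfl
  have hQbT : (P * Xb)ᵀ = Xbᵀ * P := by rw [transpose_mul, hPsymm]
  -- characterization of the RHS
  have key : ∀ M : Matrix (α ⊕ β) γ (ZMod 2),
      ((Matrix.reindex (Equiv.sumAssoc α β γ).symm (Equiv.sumAssoc α β γ).symm A).toBlocks₁₂ =
        (Matrix.reindex (Equiv.sumAssoc α β γ).symm (Equiv.sumAssoc α β γ).symm A).toBlocks₁₁ * M)
      ↔ (P * Xc = P * M.toRows₁ + P * Xb * M.toRows₂ ∧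
          R12 = Xbᵀ * P * M.toRows₁ + R11 * M.toRows₂) := by
    intro M
    rw [hA'12, hA'11, ← fromRows_toRows M, fromBlocks_mul_fromRows, fromRows_ext_iff,
      toRows₁_fromRows, toRows₂_fromRows, hQbT]
  constructor
  · rintro ⟨M₂, hM₂⟩
    rw [hB12, hB11] at hM₂
    refine ⟨fromRows (Xc - Xb * M₂) M₂, (key _).2 ⟨?_, ?_⟩⟩
    · rw [toRows₁_fromRows, toRows₂_fromRows, Matrix.mul_sub, Matrix.mul_assoc,
        sub_add_cancel]
    · rw [toRows₁_fromRows, toRows₂_fromRows, Matrix.mul_sub,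
        sub_eq_iff_eq_add.mp hM₂, Matrix.sub_mul]
      simp only [Matrix.mul_assoc]
      abel
  · rintro ⟨M, hM⟩
    obtain ⟨h1, h2⟩ := (key M).1 hM
    refine ⟨M.toRows₂, ?_⟩
    rw [hB12, hB11, sub_eq_iff_eq_add, h2, Matrix.sub_mul]
    have h3 : Xbᵀ * (P * Xc) = Xbᵀ * (P * M.toRows₁) + Xbᵀ * (P * (Xb * M.toRows₂)) := by
      rw [h1, Matrix.mul_add, Matrix.mul_assoc]
    simp only [Matrix.mul_assoc]
    rw [h3]
    abel
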